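/- Let (Ω, ℱ, P) be a probability space, let Z and H be integrable real random variables with Z ≥ H almost surely, let S : Ω → {0, 1} be measurable with P(S = 0) = ε, and let q be a real number with P(H ≤ q) = ε. Then E[(1 − S)·Z] ≥ E[H·𝟙{H ≤ q}]. -/

import Mathlib

open MeasureTheory
open scoped ENNReal

lemma key_step {Ω : Type*} [MeasurableSpace Ω] (P : Measure Ω) [IsProbabilityMeasure P]
    (H : Ω → ℝ) (hH : Integrable H P) (q : ℝ)
    (A B : Set Ω) (hA : MeasurableSet A) (hB : MeasurableSet B)
    (hPAB : P A = P B)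
    (hBq : ∀ᵐ ω ∂P, (ω ∈ B ↔ H ω ≤ q)) :
    ∫ ω in A, H ω ∂P ≥ ∫ ω in B, H ω ∂P := by
  have hint : ∀ s : Set Ω, IntegrableOn H s P := fun s => hH.integrableOn
  have hdecA : ∫ ω in A ∩ B, H ω ∂P + ∫ ω in A \ B, H ω ∂P = ∫ ω in A, H ω ∂P :=
    integral_inter_add_diff hB (hint A)
  have hdecB : ∫ ω in B ∩ A, H ω ∂P + ∫ ω in B \ A, H ω ∂P = ∫ ω in B, H ω ∂P :=
    integral_inter_add_diff hA (hint B)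
  rw [Set.inter_comm] at hdecB
  -- equal measures of differences
  have hm : P (A \ B) = P (B \ A) := by
    have h1 := measure_inter_add_diff (μ := P) A hB
    have h2 := measure_inter_add_diff (μ := P) B hA
    rw [Set.inter_comm] at h2
    have hfin : P (A ∩ B) ≠ ⊤ := measure_ne_top P _
    have : P (A ∩ B) + P (A \ B) = P (A ∩ B) + P (B \ A) := by
      rw [h1, h2, hPAB]
    exact (ENNReal.add_right_inj hfin).mp this
  have h1 : ∫ ω in A \ B, H ω ∂P ≥ (P (A \ B)).toReal * q := by
    have := setIntegral_mono_on_ae (μ := P) (f := fun _ => q) (g := H)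
      (integrableOn_const (measure_ne_top P _)) (hint _) (hA.diff hB)
      (by filter_upwards [hBq] with ω hω hmem
          exact le_of_not_ge fun h => hmem.2 (hω.2 h))
    simpa [setIntegral_const, smul_eq_mul, measureReal_def] using this
  have h2 : ∫ ω in B \ A, H ω ∂P ≤ (P (B \ A)).toReal * q := by
    have := setIntegral_mono_on_ae (μ := P) (f := H) (g := fun _ => q)
      (hint _) (integrableOn_const (measure_ne_top P _)) (hB.diff hA)
      (by filter_upwards [hBq] with ω hω hmem
          exact hω.1 hmem.1)
    simpa [setIntegral_const, smul_eq_mul, measureReal_def] using this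
  rw [hm] at h1
  linarith

theorem lower_bound_optimization_step
    {Ω : Type*} [MeasurableSpace Ω] (P : Measure Ω) [IsProbabilityMeasure P]
    (Z H : Ω → ℝ) (hZ : Integrable Z P) (hH : Integrable H P)
    (hZH : ∀ᵐ ω ∂P, Z ω ≥ H ω)
    (S : Ω → ℝ) (hS : Measurable S) (hS01 : ∀ ω, S ω = 0 ∨ S ω = 1)
    (ε : ℝ≥0∞) (hSε : P {ω | S ω = 0} = ε)
    (q : ℝ) (hq : P {ω | H ω ≤ q} = ε) :
    ∫ ω, (1 - S ω) * Z ω ∂P ≥ ∫ ω, Set.indicator {ω | H ω ≤ q} H ω ∂P := by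
  set A : Set Ω := {ω | S ω = 0} with hAdef
  have hA : MeasurableSet A := hS (measurableSet_singleton 0)
  -- measurable representative of H
  set H' : Ω → ℝ := hH.1.mk H with hH'def
  have hHH' : H =ᵐ[P] H' := hH.1.ae_eq_mk
  set B : Set Ω := {ω | H' ω ≤ q} with hBdef
  have hB : MeasurableSet B := measurableSet_le hH.1.measurable_mk measurable_const
  have hBiff : ∀ᵐ ω ∂P, (ω ∈ B ↔ H ω ≤ q) := by
    filter_upwards [hHH'] with ω hω
    simp [hBdef, Set.mem_setOf_eq, hω]
  have hPB : P B = ε := by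
    rw [← hq]
    refine measure_congr ?_
    filter_upwards [hHH'] with ω hω
    show (H' ω ≤ q) = (H ω ≤ q)
    rw [hω]
  -- bounded multiplier
  have hmul : ∀ ω, ‖1 - S ω‖ ≤ 1 := by
    intro ω; rcases hS01 ω with h | h <;> simp [h]
  have hSmeas : AEStronglyMeasurable (fun ω => 1 - S ω) P :=
    (measurable_const.sub hS).aestronglyMeasurable
  have hIZ : Integrable (fun ω => (1 - S ω) * Z ω) P :=
    hZ.bdd_mul hSmeas (Filter.Eventually.of_forall hmul)
  have hIH : Integrable (fun ω => (1 - S ω) * H ω) P :=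
    hH.bdd_mul hSmeas (Filter.Eventually.of_forall hmul)
  have step1 : ∫ ω, (1 - S ω) * Z ω ∂P ≥ ∫ ω, (1 - S ω) * H ω ∂P := by
    refine integral_mono_ae hIH hIZ ?_
    filter_upwards [hZH] with ω hω
    rcases hS01 ω with h | h
    · simp only [h, sub_zero, one_mul]; exact hω
    · simp [h]
  have step2 : ∫ ω, (1 - S ω) * H ω ∂P = ∫ ω in A, H ω ∂P := by
    rw [← integral_indicator hA]
    refine integral_congr_ae (Filter.Eventually.of_forall fun ω => ?_)
    rcases hS01 ω with h | h
    · have : ω ∈ A := h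
      simp [Set.indicator_of_mem this, h]
    · have : ω ∉ A := by simp [hAdef, Set.mem_setOf_eq, h]
      simp [Set.indicator_of_notMem this, h]
  have step3 : ∫ ω, Set.indicator {ω | H ω ≤ q} H ω ∂P = ∫ ω in B, H ω ∂P := by
    rw [← integral_indicator hB]
    refine integral_congr_ae ?_
    filter_upwards [hHH'] with ω hω
    have hmemiff : (ω ∈ {ω | H ω ≤ q}) = (ω ∈ B) := by
      show (H ω ≤ q) = (H' ω ≤ q)
      rw [hω]
    simp only [Set.indicator_apply, hmemiff]
  rw [step3]
  calc ∫ ω in B, H ω ∂P ≤ ∫ ω in A, H ω ∂P :=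
        key_step P H hH q A B hA hB (by rw [hSε, hPB]) hBiff
    _ = ∫ ω, (1 - S ω) * H ω ∂P := step2.symm
    _ ≤ ∫ ω, (1 - S ω) * Z ω ∂P := step1
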